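/- Let G ∈ ℝ^{n×m} have full column rank (so GᵀG is positive definite), set M := G Gᵀ, and let F ∈ ℝ^{n×r}. Define ρ := ‖F Fᵀ − M‖_F / λ_min(GᵀG) and assume ρ < 1/√2. Let P be the n×n matrix of the orthogonal projection of ℝ^n onto the column space of F. Then ‖(I − P) M (I − P)‖_F ≤ (1/√2) · (ρ/√(1 − ρ²)) · ‖F Fᵀ − M‖_F. -/

import Mathlib

open Matrix
open scoped InnerProductSpace

/-- Frobenius inner product of two real matrices. -/
noncomputable def finner {m n : Type*} [Fintype m] [Fintype n]
    (A B : Matrix m n ℝ) : ℝ := (Aᵀ * B).trace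

/-- Frobenius norm of a real matrix. -/
noncomputable def fnorm {m n : Type*} [Fintype m] [Fintype n]
    (A : Matrix m n ℝ) : ℝ := Real.sqrt (finner A A)

open scoped Classical in
/-- Square root of a positive semidefinite real matrix (junk value `0` otherwise). -/
noncomputable def psqrt {r : ℕ} (M : Matrix (Fin r) (Fin r) ℝ) : Matrix (Fin r) (Fin r) ℝ :=
  if h : M.PosSemidef then
    (h.1.eigenvectorUnitary : Matrix (Fin r) (Fin r) ℝ) *
      diagonal ((RCLike.ofReal : ℝ → ℝ) ∘ (√·) ∘ h.1.eigenvalues) *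
      (star (h.1.eigenvectorUnitary : Matrix (Fin r) (Fin r) ℝ)) else 0

open scoped Classical in
/-- Smallest eigenvalue of a symmetric real matrix (junk value `0` otherwise). -/
noncomputable def lammin {r : ℕ} (M : Matrix (Fin r) (Fin r) ℝ) : ℝ :=
  if h : M.IsHermitian then ⨅ i, h.eigenvalues i else 0

open scoped Classical in
/-- Largest eigenvalue of a symmetric real matrix (junk value `0` otherwise). -/
noncomputable def lammax {r : ℕ} (M : Matrix (Fin r) (Fin r) ℝ) : ℝ :=
  if h : M.IsHermitian then ⨆ i, h.eigenvalues i else 0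

/-- The matrix of the orthogonal projection of `ℝ^n` onto the column space of `F`. -/
noncomputable def projCol {n r : ℕ} (F : Matrix (Fin n) (Fin r) ℝ) :
    Matrix (Fin n) (Fin n) ℝ :=
  Matrix.toEuclideanLin.symm
    ((LinearMap.range (Matrix.toEuclideanLin F)).subtype ∘ₗ
      (Submodule.orthogonalProjectionOnto (LinearMap.range (Matrix.toEuclideanLin F))).toLinearMap)

/-! ### Auxiliary lemmas -/

section Aux

lemma aux_trace_nonneg {k : ℕ} {A : Matrix (Fin k) (Fin k) ℝ} (hA : A.PosSemidef) :
    0 ≤ A.trace := by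
  apply Finset.sum_nonneg
  intro i _
  exact hA.diag_nonneg

lemma spectral_real {k : ℕ} {A : Matrix (Fin k) (Fin k) ℝ} (hA : A.IsHermitian) :
    A = (hA.eigenvectorUnitary : Matrix (Fin k) (Fin k) ℝ) * diagonal hA.eigenvalues
      * (hA.eigenvectorUnitary : Matrix (Fin k) (Fin k) ℝ)ᴴ := by
  simpa [Matrix.star_eq_conjTranspose] using hA.spectral_theorem

lemma unit_mul {k : ℕ} {A : Matrix (Fin k) (Fin k) ℝ} (hA : A.IsHermitian) :
    (hA.eigenvectorUnitary : Matrix (Fin k) (Fin k) ℝ) *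
      (hA.eigenvectorUnitary : Matrix (Fin k) (Fin k) ℝ)ᴴ = 1 :=
  Matrix.mem_unitaryGroup_iff.mp hA.eigenvectorUnitary.2

lemma unit_mul' {k : ℕ} {A : Matrix (Fin k) (Fin k) ℝ} (hA : A.IsHermitian) :
    (hA.eigenvectorUnitary : Matrix (Fin k) (Fin k) ℝ)ᴴ *
      (hA.eigenvectorUnitary : Matrix (Fin k) (Fin k) ℝ) = 1 :=
  Matrix.mem_unitaryGroup_iff'.mp hA.eigenvectorUnitary.2

lemma smul_one_conj {k : ℕ} {A : Matrix (Fin k) (Fin k) ℝ} (hA : A.IsHermitian) (c : ℝ) :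
    (hA.eigenvectorUnitary : Matrix (Fin k) (Fin k) ℝ) *
      (c • (1 : Matrix (Fin k) (Fin k) ℝ)) *
      (hA.eigenvectorUnitary : Matrix (Fin k) (Fin k) ℝ)ᴴ = c • 1 := by
  rw [Matrix.mul_smul, Matrix.mul_one, Matrix.smul_mul, unit_mul hA]

lemma psd_of_le_eig {k : ℕ} {A : Matrix (Fin k) (Fin k) ℝ} (hA : A.IsHermitian) {c : ℝ}
    (h : ∀ i, c ≤ hA.eigenvalues i) :
    (A - c • (1 : Matrix (Fin k) (Fin k) ℝ)).PosSemidef := by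
  have key : A - c • (1 : Matrix (Fin k) (Fin k) ℝ) =
      (hA.eigenvectorUnitary : Matrix (Fin k) (Fin k) ℝ) *
        diagonal (fun i => hA.eigenvalues i - c) *
        (hA.eigenvectorUnitary : Matrix (Fin k) (Fin k) ℝ)ᴴ := by
    have h1 : diagonal (fun i => hA.eigenvalues i - c)
        = diagonal hA.eigenvalues - c • (1 : Matrix (Fin k) (Fin k) ℝ) := by
      rw [Matrix.smul_one_eq_diagonal, ← diagonal_sub]
    rw [h1, Matrix.mul_sub, Matrix.sub_mul, smul_one_conj hA, ← spectral_real hA]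
  rw [key]
  exact (posSemidef_diagonal_iff.mpr (fun i => by linarith [h i])).mul_mul_conjTranspose_same _

lemma sq_decomp {k : ℕ} {E : Matrix (Fin k) (Fin k) ℝ} (hE : E.IsHermitian) :
    E * E = (hE.eigenvectorUnitary : Matrix (Fin k) (Fin k) ℝ) *
      diagonal (fun i => hE.eigenvalues i ^ 2) *
      (hE.eigenvectorUnitary : Matrix (Fin k) (Fin k) ℝ)ᴴ := by
  set U := (hE.eigenvectorUnitary : Matrix (Fin k) (Fin k) ℝ)
  set D := diagonal hE.eigenvalues with hDdef
  calc E * E = (U * D * Uᴴ) * (U * D * Uᴴ) := by rw [← spectral_real hE]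
  _ = U * D * ((Uᴴ * U) * (D * Uᴴ)) := by simp only [Matrix.mul_assoc]
  _ = U * (D * D) * Uᴴ := by rw [unit_mul' hE, Matrix.one_mul]; simp only [Matrix.mul_assoc]
  _ = U * diagonal (fun i => hE.eigenvalues i ^ 2) * Uᴴ := by
      have hfun : (fun i => hE.eigenvalues i * hE.eigenvalues i)
          = fun i => hE.eigenvalues i ^ 2 := by
        funext i
        exact (pow_two (hE.eigenvalues i)).symm
      rw [hDdef, diagonal_mul_diagonal, hfun]

lemma trace_sq {k : ℕ} {E : Matrix (Fin k) (Fin k) ℝ} (hE : E.IsHermitian) :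
    (E * E).trace = ∑ i, hE.eigenvalues i ^ 2 := by
  rw [sq_decomp hE, Matrix.trace_mul_comm, ← Matrix.mul_assoc, unit_mul' hE, Matrix.one_mul,
    Matrix.trace_diagonal]

lemma psd_trace_sq_smul_sub {k : ℕ} {E : Matrix (Fin k) (Fin k) ℝ} (hE : E.IsHermitian) :
    ((E * E).trace • (1 : Matrix (Fin k) (Fin k) ℝ) - E * E).PosSemidef := by
  set c := (E * E).trace with hc
  have key : c • (1 : Matrix (Fin k) (Fin k) ℝ) - E * E =
      (hE.eigenvectorUnitary : Matrix (Fin k) (Fin k) ℝ) *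
        diagonal (fun i => c - hE.eigenvalues i ^ 2) *
        (hE.eigenvectorUnitary : Matrix (Fin k) (Fin k) ℝ)ᴴ := by
    have h1 : diagonal (fun i => c - hE.eigenvalues i ^ 2)
        = c • (1 : Matrix (Fin k) (Fin k) ℝ) - diagonal (fun i => hE.eigenvalues i ^ 2) := by
      rw [Matrix.smul_one_eq_diagonal, ← diagonal_sub]
    rw [h1, Matrix.mul_sub, Matrix.sub_mul, smul_one_conj hE, ← sq_decomp hE]
  rw [key]
  refine (posSemidef_diagonal_iff.mpr (fun i => ?_)).mul_mul_conjTranspose_same _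
  have h2 : hE.eigenvalues i ^ 2 ≤ c := by
    rw [hc, trace_sq hE]
    exact Finset.single_le_sum (f := fun j => hE.eigenvalues j ^ 2) (fun j _ => sq_nonneg _) (Finset.mem_univ i)
  linarith

lemma psd_smul {k : ℕ} {A : Matrix (Fin k) (Fin k) ℝ} (hA : A.PosSemidef) {c : ℝ} (hc : 0 ≤ c) :
    (c • A).PosSemidef := by
  constructor
  · show (c • A)ᴴ = c • A
    rw [Matrix.conjTranspose_smul, star_trivial, hA.1.eq]
  · intro x
    exact (hA.smul hc).2 x

lemma toEuclideanLin_mul {a b c : ℕ} (A : Matrix (Fin a) (Fin b) ℝ) (B : Matrix (Fin b) (Fin c) ℝ) :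
    Matrix.toEuclideanLin (A * B) = (Matrix.toEuclideanLin A) ∘ₗ (Matrix.toEuclideanLin B) := by
  simp [Matrix.toEuclideanLin_eq_toLin,
    Matrix.toLin_mul (PiLp.basisFun 2 ℝ (Fin c)) (PiLp.basisFun 2 ℝ (Fin b))]

lemma projCol_apply {n r : ℕ} (F : Matrix (Fin n) (Fin r) ℝ) :
    Matrix.toEuclideanLin (projCol F) =
      (LinearMap.range (Matrix.toEuclideanLin F)).subtype ∘ₗ
        (Submodule.orthogonalProjectionOnto (LinearMap.range (Matrix.toEuclideanLin F))).toLinearMap :=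
  Matrix.toEuclideanLin.apply_symm_apply _

lemma projCol_idem {n r : ℕ} (F : Matrix (Fin n) (Fin r) ℝ) :
    projCol F * projCol F = projCol F := by
  set K := LinearMap.range (Matrix.toEuclideanLin F)
  apply Matrix.toEuclideanLin.injective
  rw [toEuclideanLin_mul, projCol_apply]
  ext x
  simp [Submodule.orthogonalProjectionOnto_mem_subspace_eq_self,
    Submodule.starProjection_eq_self_iff.mpr (Submodule.starProjection_apply_mem _ _)]

lemma projCol_transpose {n r : ℕ} (F : Matrix (Fin n) (Fin r) ℝ) :
    (projCol F)ᵀ = projCol F := by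
  set K := LinearMap.range (Matrix.toEuclideanLin F) with hK
  set p := (K.subtype ∘ₗ (Submodule.orthogonalProjectionOnto K).toLinearMap) with hp
  have hsym : ∀ x y : EuclideanSpace ℝ (Fin n), ⟪p x, y⟫_ℝ = ⟪x, p y⟫_ℝ := by
    intro x y
    exact K.starProjection_isSymmetric x y
  have hadj : p = LinearMap.adjoint p := (LinearMap.eq_adjoint_iff p p).mpr hsym
  have h : (projCol F)ᴴ = projCol F := by
    apply Matrix.toEuclideanLin.injective
    rw [Matrix.toEuclideanLin_conjTranspose_eq_adjoint, projCol_apply, ← hp, ← hadj]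
  exact h

lemma projCol_mul {n r : ℕ} (F : Matrix (Fin n) (Fin r) ℝ) :
    projCol F * F = F := by
  apply Matrix.toEuclideanLin.injective
  rw [toEuclideanLin_mul, projCol_apply]
  ext x
  have hm : Matrix.toEuclideanLin F x ∈ LinearMap.range (Matrix.toEuclideanLin F) :=
    LinearMap.mem_range_self _ x
  simp [Submodule.starProjection_eq_self_iff.mpr, hm]

end Aux

set_option maxHeartbeats 1000000 in
/-- matrix form of the paper's appendix Lemma 14.
Bound on the principal-angle quantity for symmetric factorizations. -/
theorem stmt_7 {n m r : ℕ}
    (G : Matrix (Fin n) (Fin m) ℝ) (hG : (Gᵀ * G).PosDef)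
    (M : Matrix (Fin n) (Fin n) ℝ) (hM : M = G * Gᵀ)
    (F : Matrix (Fin n) (Fin r) ℝ)
    (ρ : ℝ) (hρdef : ρ = fnorm (F * Fᵀ - M) / lammin (Gᵀ * G))
    (hρ : ρ < 1 / Real.sqrt 2)
    (P : Matrix (Fin n) (Fin n) ℝ) (hP : P = projCol F) :
    fnorm ((1 - P) * M * (1 - P)) ≤
      1 / Real.sqrt 2 * (ρ / Real.sqrt (1 - ρ ^ 2)) * fnorm (F * Fᵀ - M) := by
  rcases Nat.eq_zero_or_pos m with hm | hm
  · -- degenerate case `m = 0`: here `M = 0` and `lammin = 0`, so `ρ = 0` and both sides vanish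
    subst hm
    have hM0 : M = 0 := by
      rw [hM]; ext i j; simp [Matrix.mul_apply]
    have hherm : (Gᵀ * G).IsHermitian := hG.1
    have hlam0 : lammin (Gᵀ * G) = 0 := by
      rw [lammin, dif_pos hherm, iInf_of_isEmpty, Real.sInf_empty]
    have hρ0 : ρ = 0 := by rw [hρdef, hlam0, div_zero]
    have hL : fnorm ((1 - P) * M * (1 - P)) = 0 := by
      rw [hM0]
      simp [fnorm, finner]
    rw [hL, hρ0]
    simp
  · -- main case `m > 0`
    haveI : Nonempty (Fin m) := ⟨⟨0, hm⟩⟩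
    set E := F * Fᵀ - M with hEdef
    set Q : Matrix (Fin n) (Fin n) ℝ := 1 - P with hQdef
    set lam := lammin (Gᵀ * G) with hlamdef
    -- basic symmetry facts
    have hMsym : Mᵀ = M := by rw [hM, Matrix.transpose_mul, Matrix.transpose_transpose]
    have hEsym : Eᵀ = E := by
      rw [hEdef, Matrix.transpose_sub, Matrix.transpose_mul, Matrix.transpose_transpose, hMsym]
    have hPt : Pᵀ = P := by rw [hP]; exact projCol_transpose F
    have hPP : P * P = P := by rw [hP]; exact projCol_idem F
    have hPF : P * F = F := by rw [hP]; exact projCol_mul F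
    have hQt : Qᵀ = Q := by rw [hQdef, Matrix.transpose_sub, Matrix.transpose_one, hPt]
    have hQQ : Q * Q = Q := by
      rw [hQdef, Matrix.sub_mul, Matrix.one_mul, Matrix.mul_sub, Matrix.mul_one, hPP,
        sub_self, sub_zero]
    have hQQ' : ∀ X : Matrix (Fin n) (Fin n) ℝ, Q * (Q * X) = Q * X := by
      intro X; rw [← Matrix.mul_assoc, hQQ]
    have hQF : Q * F = 0 := by
      rw [hQdef, Matrix.sub_mul, Matrix.one_mul, hPF, sub_self]
    have hQE : Q * E = -(Q * M) := by
      rw [hEdef, Matrix.mul_sub, ← Matrix.mul_assoc, hQF, Matrix.zero_mul, zero_sub]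
    have hEQ : E * Q = -(M * Q) := by
      have h := congrArg Matrix.transpose hQE
      rw [Matrix.transpose_mul, Matrix.transpose_neg, Matrix.transpose_mul, hQt, hEsym,
        hMsym] at h
      exact h
    -- eigenvalue facts
    have hherm : (Gᵀ * G).IsHermitian := hG.1
    have hlam_le : ∀ i, lam ≤ hherm.eigenvalues i := by
      intro i
      rw [hlamdef, lammin, dif_pos hherm]
      exact ciInf_le (Set.Finite.bddBelow (Set.finite_range _)) i
    have hlam_pos : 0 < lam := by
      obtain ⟨i0, hi0⟩ := Finite.exists_min hherm.eigenvalues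
      rw [hlamdef, lammin, dif_pos hherm]
      exact lt_of_lt_of_le (hG.eigenvalues_pos i0) (le_ciInf hi0)
    -- positive semidefiniteness facts
    have hMpsd : M.PosSemidef := by
      rw [hM]; exact posSemidef_self_mul_conjTranspose G
    have hPpsd : P.PosSemidef := by
      have h := posSemidef_self_mul_conjTranspose P
      rwa [show Pᴴ = P from hPt, hPP] at h
    have hGGl : ((Gᵀ * G) - lam • 1).PosSemidef := psd_of_le_eig hherm hlam_le
    have hMMlam : (M * M - lam • M).PosSemidef := by
      have key : G * ((Gᵀ * G) - lam • (1 : Matrix (Fin m) (Fin m) ℝ)) * Gᴴ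
          = M * M - lam • M := by
        show G * ((Gᵀ * G) - lam • (1 : Matrix (Fin m) (Fin m) ℝ)) * Gᵀ = M * M - lam • M
        rw [hM, Matrix.mul_sub, Matrix.sub_mul, Matrix.mul_smul, Matrix.smul_mul,
          Matrix.mul_one]
        simp only [Matrix.mul_assoc]
      have h := hGGl.mul_mul_conjTranspose_same G
      rwa [key] at h
    -- key scalars
    set c := finner E E with hcdef
    have hceq : c = (E * E).trace := by rw [hcdef, finner, hEsym]
    set A := Q * M * Q with hAdef
    have hApsd : A.PosSemidef := by
      have h := hMpsd.mul_mul_conjTranspose_same Q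
      rwa [show Qᴴ = Q from hQt] at h
    set t1 := A.trace with ht1def
    set t2 := (A * A).trace with ht2def
    set s := ((E * E) * Q).trace with hsdef
    clear_value E Q lam c A t1 t2 s
    have hc0 : 0 ≤ c := by
      rw [hcdef, finner]
      exact aux_trace_nonneg (posSemidef_conjTranspose_mul_self E)
    have hAt : Aᵀ = A := by
      rw [hAdef, Matrix.transpose_mul, Matrix.transpose_mul, hQt, hMsym, Matrix.mul_assoc]
    have ht1nn : 0 ≤ t1 := by rw [ht1def]; exact aux_trace_nonneg hApsd
    have ht2nn : 0 ≤ t2 := by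
      rw [ht2def]
      have h := aux_trace_nonneg (posSemidef_conjTranspose_mul_self A)
      rwa [show Aᴴ = A from hAt] at h
    -- `Q (M*M) Q = Q (E*E) Q`
    have hQM : Q * M = -(Q * E) := by rw [hQE, neg_neg]
    have hMQ : M * Q = -(E * Q) := by rw [hEQ, neg_neg]
    have hQMMQ : Q * (M * M) * Q = Q * (E * E) * Q := by
      calc Q * (M * M) * Q = (Q * M) * (M * Q) := by simp only [Matrix.mul_assoc]
      _ = (-(Q * E)) * (-(E * Q)) := by rw [hQM, hMQ]
      _ = (Q * E) * (E * Q) := by rw [neg_mul_neg]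
      _ = Q * (E * E) * Q := by simp only [Matrix.mul_assoc]
    -- (a) the trace inequality `lam * t1 ≤ s`
    have hQMMpsd : (Q * (M * M) * Q - lam • A).PosSemidef := by
      have h := hMMlam.mul_mul_conjTranspose_same Q
      have key : Q * (M * M - lam • M) * Qᴴ = Q * (M * M) * Q - lam • A := by
        show Q * (M * M - lam • M) * Qᵀ = Q * (M * M) * Q - lam • A
        rw [hQt, Matrix.mul_sub, Matrix.sub_mul, Matrix.mul_smul, Matrix.smul_mul, hAdef]
      rwa [key] at h
    have hs_eq : (Q * (M * M) * Q).trace = s := by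
      rw [hQMMQ, Matrix.trace_mul_comm, ← Matrix.mul_assoc, hQQ, Matrix.trace_mul_comm]
      exact hsdef.symm
    have hlt1s : lam * t1 ≤ s := by
      have h := aux_trace_nonneg hQMMpsd
      rw [Matrix.trace_sub, Matrix.trace_smul, hs_eq, ← ht1def] at h
      simp only [smul_eq_mul] at h
      linarith
    -- (b) the trace inequality `2*s ≤ c + t2`
    set t := (E * (Q * (E * Q))).trace with htdef
    clear_value t
    have hQEQ : Q * E * Q = -A := by
      rw [hQE, hAdef, Matrix.neg_mul]
    have ht_eq_t2 : t = t2 := by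
      have h1 : A * A = (Q * E * Q) * (Q * E * Q) := by rw [hQEQ, neg_mul_neg]
      have h2 : ((Q * E * Q) * (Q * E * Q)).trace = t := by
        have e1 : (Q * E * Q) * (Q * E * Q) = Q * (E * (Q * (E * Q))) := by
          simp only [Matrix.mul_assoc, hQQ']
        rw [e1, Matrix.trace_mul_comm]
        have e2 : E * (Q * (E * Q)) * Q = E * (Q * (E * Q)) := by
          simp only [Matrix.mul_assoc, hQQ]
        rw [e2, ← htdef]
      rw [ht2def, h1, h2]
    have hX : 0 ≤ c - 2 * s + t2 := by
      set X := E - Q * E - E * Q + Q * (E * Q) with hXdef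
      have hXP : X = P * E * P := by
        have hPQ : P = 1 - Q := by rw [hQdef]; abel
        rw [hXdef, hPQ]
        noncomm_ring
      have hXt : Xᵀ = X := by
        rw [hXP, Matrix.transpose_mul, Matrix.transpose_mul, hPt, hEsym, Matrix.mul_assoc]
      have hXnn : 0 ≤ (X * X).trace := by
        have h := aux_trace_nonneg (posSemidef_conjTranspose_mul_self X)
        rwa [show Xᴴ = X from hXt] at h
      -- expand (X*X).trace
      have hprod : X * X =
          E * E - E * (Q * E) - E * (E * Q) + E * (Q * (E * Q))
          - (Q * E) * E + (Q * E) * (Q * E) + (Q * E) * (E * Q) - (Q * E) * (Q * (E * Q))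
          - (E * Q) * E + (E * Q) * (Q * E) + (E * Q) * (E * Q) - (E * Q) * (Q * (E * Q))
          + (Q * (E * Q)) * E - (Q * (E * Q)) * (Q * E) - (Q * (E * Q)) * (E * Q)
          + (Q * (E * Q)) * (Q * (E * Q)) := by
        rw [hXdef]; noncomm_ring
      have l1 : (E * (Q * E)).trace = s := by
        rw [Matrix.trace_mul_comm]
        simp only [Matrix.mul_assoc]
        rw [Matrix.trace_mul_comm]
        rw [hsdef, Matrix.mul_assoc]
      have l2 : (E * (E * Q)).trace = s := by rw [← Matrix.mul_assoc, ← hsdef]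
      have l3 : ((Q * E) * E).trace = s := by
        rw [Matrix.trace_mul_comm]
        exact l1
      have l4 : ((Q * E) * (Q * E)).trace = t := by
        have e : (Q * E) * (Q * E) = Q * (E * (Q * E)) := by simp only [Matrix.mul_assoc]
        rw [e, Matrix.trace_mul_comm]
        have e2 : E * (Q * E) * Q = E * (Q * (E * Q)) := by simp only [Matrix.mul_assoc]
        rw [e2, ← htdef]
      have l5 : ((Q * E) * (E * Q)).trace = s := by
        have e : (Q * E) * (E * Q) = Q * ((E * E) * Q) := by simp only [Matrix.mul_assoc]
        rw [e, Matrix.trace_mul_comm, Matrix.mul_assoc, hQQ, ← hsdef]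
      have l6 : ((Q * E) * (Q * (E * Q))).trace = t := by
        have e : (Q * E) * (Q * (E * Q)) = Q * (E * (Q * (E * Q))) := by
          simp only [Matrix.mul_assoc]
        rw [e, Matrix.trace_mul_comm]
        have e2 : E * (Q * (E * Q)) * Q = E * (Q * (E * Q)) := by
          simp only [Matrix.mul_assoc, hQQ]
        rw [e2, ← htdef]
      have l7 : ((E * Q) * E).trace = s := by
        rw [Matrix.trace_mul_comm, ← Matrix.mul_assoc, ← hsdef]
      have l8 : ((E * Q) * (Q * E)).trace = s := by
        have e : (E * Q) * (Q * E) = E * (Q * E) := by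
          simp only [Matrix.mul_assoc, hQQ']
        rw [e, l1]
      have l9 : ((E * Q) * (E * Q)).trace = t := by
        simp only [Matrix.mul_assoc]
        rw [← htdef]
      have l10 : ((E * Q) * (Q * (E * Q))).trace = t := by
        have e : (E * Q) * (Q * (E * Q)) = E * (Q * (E * Q)) := by
          simp only [Matrix.mul_assoc, hQQ']
        rw [e, ← htdef]
      have l11 : ((Q * (E * Q)) * E).trace = t := by
        rw [Matrix.trace_mul_comm, ← htdef]
      have l12 : ((Q * (E * Q)) * (Q * E)).trace = t := by
        have e : (Q * (E * Q)) * (Q * E) = Q * (E * (Q * E)) := by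
          simp only [Matrix.mul_assoc, hQQ']
        rw [e, Matrix.trace_mul_comm]
        have e2 : E * (Q * E) * Q = E * (Q * (E * Q)) := by simp only [Matrix.mul_assoc]
        rw [e2, ← htdef]
      have l13 : ((Q * (E * Q)) * (E * Q)).trace = t := by
        have e : (Q * (E * Q)) * (E * Q) = Q * (E * (Q * (E * Q))) := by
          simp only [Matrix.mul_assoc]
        rw [e, Matrix.trace_mul_comm]
        have e2 : E * (Q * (E * Q)) * Q = E * (Q * (E * Q)) := by
          simp only [Matrix.mul_assoc, hQQ]
        rw [e2, ← htdef]
      have l14 : ((Q * (E * Q)) * (Q * (E * Q))).trace = t := by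
        have e : (Q * (E * Q)) * (Q * (E * Q)) = Q * (E * (Q * (E * Q))) := by
          simp only [Matrix.mul_assoc, hQQ']
        rw [e, Matrix.trace_mul_comm]
        have e2 : E * (Q * (E * Q)) * Q = E * (Q * (E * Q)) := by
          simp only [Matrix.mul_assoc, hQQ]
        rw [e2, ← htdef]
      have hXXtrace : (X * X).trace = c - 2 * s + t2 := by
        rw [hprod]
        simp only [Matrix.trace_add, Matrix.trace_sub]
        rw [l1, l2, l3, l4, l5, l6, l7, l8, l9, l10, l11, l12, l13, l14, ← htdef, ← hceq,
          ht_eq_t2]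
        ring
      linarith [hXnn, hXXtrace.symm.le, hXXtrace.le]
    have hkey2 : 2 * s ≤ c + t2 := by linarith
    -- (c) the trace inequality `lam * t2 ≤ c * t1`
    have hZpsd : (c • (1 : Matrix (Fin n) (Fin n) ℝ) - lam • A).PosSemidef := by
      have h2 := (psd_trace_sq_smul_sub (show E.IsHermitian from hEsym)).mul_mul_conjTranspose_same Q
      rw [show Qᴴ = Q from hQt] at h2
      have h1 := psd_smul hPpsd hc0
      have hsum := (h1.add h2).add hQMMpsd
      have heq : c • P + (Q * ((E * E).trace • (1 : Matrix (Fin n) (Fin n) ℝ) - E * E) * Q)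
          + (Q * (M * M) * Q - lam • A) = c • 1 - lam • A := by
        rw [← hceq]
        have e1 : Q * (c • (1 : Matrix (Fin n) (Fin n) ℝ) - E * E) * Q
            = c • Q - Q * (E * E) * Q := by
          rw [Matrix.mul_sub, Matrix.sub_mul, Matrix.mul_smul, Matrix.smul_mul, Matrix.mul_one,
            hQQ]
        rw [e1, ← hQMMQ]
        have e2 : c • P + c • Q = c • (1 : Matrix (Fin n) (Fin n) ℝ) := by
          rw [← smul_add, hQdef]
          congr 1
          abel
        rw [← e2]
        abel
      rwa [heq] at hsum
    have hkey1 : lam * t2 ≤ c * t1 := by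
      obtain ⟨S, hSsa, -, hS1'⟩ := open scoped MatrixOrder in
        CFC.exists_sqrt_of_isSelfAdjoint_of_quasispectrumRestricts hApsd.isHermitian
          (QuasispectrumRestricts.nnreal_of_nonneg hApsd.nonneg)
      have hS1 : S * S = A := by simpa using hS1'
      have hSH : Sᴴ = S := hSsa.star_eq
      have hSAS : S * A * S = A * A := by
        calc S * A * S = S * (S * S) * S := by rw [hS1]
        _ = (S * S) * (S * S) := by simp only [Matrix.mul_assoc]
        _ = A * A := by rw [hS1]
      have h := hZpsd.mul_mul_conjTranspose_same S
      rw [hSH] at h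
      have key : S * (c • (1 : Matrix (Fin n) (Fin n) ℝ) - lam • A) * S
          = c • A - lam • (A * A) := by
        rw [Matrix.mul_sub, Matrix.sub_mul, Matrix.mul_smul, Matrix.mul_one, Matrix.smul_mul,
          hS1, Matrix.mul_smul, Matrix.smul_mul, hSAS]
      rw [key] at h
      have htr := aux_trace_nonneg h
      rw [Matrix.trace_sub, Matrix.trace_smul, Matrix.trace_smul, ← ht1def, ← ht2def] at htr
      simp only [smul_eq_mul] at htr
      linarith
    -- numeric endgame
    have hfE : fnorm E = Real.sqrt c := by rw [hcdef]; rfl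
    have hρ' : ρ = Real.sqrt c / lam := by rw [hρdef, hfE]
    have hρnn : 0 ≤ ρ := by rw [hρ']; positivity
    have hsqrt2 : (0 : ℝ) < Real.sqrt 2 := by positivity
    have hc_lt : 2 * c < lam ^ 2 := by
      have h1 : Real.sqrt c / lam < 1 / Real.sqrt 2 := by rw [← hρ']; exact hρ
      rw [div_lt_div_iff₀ hlam_pos hsqrt2] at h1
      have h2 : 0 ≤ Real.sqrt c * Real.sqrt 2 := by positivity
      have h3 := mul_self_lt_mul_self h2 h1
      have h4 : Real.sqrt c * Real.sqrt c = c := Real.mul_self_sqrt hc0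
      have h5 : Real.sqrt 2 * Real.sqrt 2 = 2 := Real.mul_self_sqrt (by norm_num)
      have h6 : Real.sqrt c * Real.sqrt 2 * (Real.sqrt c * Real.sqrt 2) = 2 * c := by
        calc Real.sqrt c * Real.sqrt 2 * (Real.sqrt c * Real.sqrt 2)
            = (Real.sqrt c * Real.sqrt c) * (Real.sqrt 2 * Real.sqrt 2) := by ring
        _ = 2 * c := by rw [h4, h5]; ring
      have h7 : (1 : ℝ) * lam * ((1 : ℝ) * lam) = lam ^ 2 := by ring
      rw [h6, h7] at h3
      exact h3
    have hρsq : ρ ^ 2 = c / lam ^ 2 := by rw [hρ', div_pow, Real.sq_sqrt hc0]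
    have hlam2pos : (0 : ℝ) < lam ^ 2 := by positivity
    have h1ρpos : 0 < 1 - ρ ^ 2 := by
      rw [hρsq, sub_pos, div_lt_one hlam2pos]
      linarith
    have tkey : t2 * (2 * lam ^ 2 - 2 * c) ≤ c ^ 2 := by
      have e1 : 2 * lam * t1 ≤ c + t2 := by linarith
      have e2 : c * (2 * lam * t1) ≤ c * (c + t2) := mul_le_mul_of_nonneg_left e1 hc0
      have e3 : (2 * lam) * (lam * t2) ≤ (2 * lam) * (c * t1) :=
        mul_le_mul_of_nonneg_left hkey1 (by linarith)
      linarith only [e2, e3, mul_nonneg hc0 ht2nn]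
    have hdenom : (0 : ℝ) < 2 * lam ^ 2 - 2 * c := by linarith
    have hT2le : t2 ≤ c ^ 2 / (2 * lam ^ 2 - 2 * c) := (le_div_iff₀ hdenom).mpr tkey
    have hLHS : fnorm A = Real.sqrt t2 := by
      have hfin : finner A A = t2 := by
        rw [finner, hAt, ht2def]
      rw [fnorm, hfin]
    rw [hLHS, hfE]
    have hRHSnn : 0 ≤ 1 / Real.sqrt 2 * (ρ / Real.sqrt (1 - ρ ^ 2)) * Real.sqrt c :=
      mul_nonneg (mul_nonneg (by positivity) (div_nonneg hρnn (Real.sqrt_nonneg _)))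
        (Real.sqrt_nonneg _)
    have hRsq : (1 / Real.sqrt 2 * (ρ / Real.sqrt (1 - ρ ^ 2)) * Real.sqrt c) ^ 2
        = c ^ 2 / (2 * lam ^ 2 - 2 * c) := by
      rw [mul_pow, mul_pow, div_pow, div_pow, Real.sq_sqrt h1ρpos.le, Real.sq_sqrt hc0,
        Real.sq_sqrt (by norm_num : (0:ℝ) ≤ 2), one_pow, hρsq]
      have hlamne : lam ≠ 0 := ne_of_gt hlam_pos
      have hne : lam ^ 2 - c ≠ 0 := ne_of_gt (by linarith : (0:ℝ) < lam ^ 2 - c)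
      field_simp
    calc Real.sqrt t2
        ≤ Real.sqrt ((1 / Real.sqrt 2 * (ρ / Real.sqrt (1 - ρ ^ 2)) * Real.sqrt c) ^ 2) := by
          apply Real.sqrt_le_sqrt
          rw [hRsq]
          exact hT2le
      _ = 1 / Real.sqrt 2 * (ρ / Real.sqrt (1 - ρ ^ 2)) * Real.sqrt c :=
          Real.sqrt_sq hRHSnn
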